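/- In a free group, the relation of commuting is transitive on nontrivial elements: if a, b, c are nontrivial elements of a free group with ab = ba and bc = cb, then ac = ca. -/

import Mathlib

open FreeGroup

namespace FGCommuteAux

variable {α : Type*}

/-- Prepending a letter with no cancellation keeps the word reduced. -/
lemma reduce_cons_of_ne [DecidableEq α] {L : List (α × Bool)}
    (hL : FreeGroup.reduce L = L) {p : α × Bool}
    (h : L.head? ≠ some (p.1, !p.2)) :
    FreeGroup.reduce (p :: L) = p :: L := by
  rw [FreeGroup.reduce.cons, hL]
  cases L with
  | nil => rfl
  | cons q t =>
    have hq : ¬ (p.1 = q.1 ∧ p.2 = !q.2) := by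
      rintro ⟨h1, h2⟩
      apply h
      simp only [List.head?_cons, Option.some_inj]
      obtain ⟨p1, p2⟩ := p
      obtain ⟨q1, q2⟩ := q
      simp only at h1 h2
      subst h1
      simp only [Prod.mk.injEq, true_and]
      rw [h2, Bool.not_not]
    simp [hq]

lemma head?_invRev {L : List (α × Bool)} :
    (FreeGroup.invRev L).head? = (L.getLast?).map (fun q => (q.1, !q.2)) := by
  simp [FreeGroup.invRev, List.head?_reverse, List.getLast?_map]

/-- Appending a letter with no cancellation keeps the word reduced. -/
lemma reduce_append_of_ne [DecidableEq α] {L : List (α × Bool)}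
    (hL : FreeGroup.reduce L = L) {p : α × Bool}
    (h : L.getLast? ≠ some (p.1, !p.2)) :
    FreeGroup.reduce (L ++ [p]) = L ++ [p] := by
  apply FreeGroup.invRev_injective
  rw [← FreeGroup.reduce_invRev]
  have hrev : FreeGroup.invRev (L ++ [p]) = (p.1, !p.2) :: FreeGroup.invRev L := by
    simp [FreeGroup.invRev]
  rw [hrev]
  have hLred : FreeGroup.reduce (FreeGroup.invRev L) = FreeGroup.invRev L := by
    rw [FreeGroup.reduce_invRev, hL]
  have hhead : (FreeGroup.invRev L).head? ≠ some ((p.1, !p.2).1, !(p.1, !p.2).2) := by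
    rw [head?_invRev]
    simp only [Bool.not_not]
    intro hcon
    rcases Option.map_eq_some_iff.mp hcon with ⟨q, hq, hq2⟩
    apply h
    rw [hq, Option.some_inj]
    obtain ⟨q1, q2⟩ := q
    obtain ⟨p1, p2⟩ := p
    simp only [Prod.mk.injEq] at hq2 ⊢
    refine ⟨hq2.1, ?_⟩
    have := hq2.2
    cases p2 <;> cases q2 <;> simp_all
  rw [reduce_cons_of_ne hLred hhead]

/-- The key combinatorial step: if `z ≠ 1` commutes with `mk [p]` and the reduced word of
`z` neither begins nor ends in a way that cancels with `p`, then it begins and ends with `p`. -/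
lemma head_and_last [DecidableEq α] {z : FreeGroup α} (hz : z ≠ 1) {p : α × Bool}
    (hcomm : z * FreeGroup.mk [p] = FreeGroup.mk [p] * z)
    (hh : z.toWord.head? ≠ some (p.1, !p.2))
    (hl : z.toWord.getLast? ≠ some (p.1, !p.2)) :
    z.toWord.head? = some p ∧ z.toWord.getLast? = some p := by
  set w := z.toWord with hw
  have hwred : FreeGroup.reduce w = w := FreeGroup.reduce_toWord z
  have hwne : w ≠ [] := fun h => hz (FreeGroup.toWord_eq_nil_iff.mp h)
  have hzmk : z = FreeGroup.mk w := (FreeGroup.mk_toWord (x := z)).symm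
  have h1 : (z * FreeGroup.mk [p]).toWord = w ++ [p] := by
    rw [hzmk, FreeGroup.mul_mk, FreeGroup.toWord_mk, reduce_append_of_ne hwred hl]
  have h2 : (FreeGroup.mk [p] * z).toWord = p :: w := by
    rw [hzmk, FreeGroup.mul_mk, FreeGroup.toWord_mk]
    exact reduce_cons_of_ne hwred hh
  have heq : w ++ [p] = p :: w := by rw [← h1, ← h2, hcomm]
  constructor
  · have := congrArg List.head? heq
    rwa [List.head?_append_of_ne_nil _ hwne, List.head?_cons] at this
  · have h3 : (p :: w) = [p] ++ w := rfl
    have := congrArg List.getLast? heq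
    rw [List.getLast?_append_of_ne_nil w (l₂ := [p]) (by simp), h3,
      List.getLast?_append_of_ne_nil _ hwne] at this
    simpa using this.symm

/-- An element of a free group commuting with two distinct generators is trivial. -/
lemma eq_one_of_commute_two [DecidableEq α] {x y : α} (hxy : x ≠ y) {z : FreeGroup α}
    (hx : z * FreeGroup.of x = FreeGroup.of x * z)
    (hy : z * FreeGroup.of y = FreeGroup.of y * z) : z = 1 := by
  by_contra hz
  have hcomm : ∀ p : α × Bool, p.1 = x ∨ p.1 = y →
      z * FreeGroup.mk [p] = FreeGroup.mk [p] * z := by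
    rintro ⟨v, d⟩ hv
    have hofv : Commute z (FreeGroup.of v) := by
      rcases hv with h | h <;> subst h <;> assumption
    cases d
    · have hmk : FreeGroup.mk [(v, false)] = (FreeGroup.of v)⁻¹ := by
        rw [show FreeGroup.of v = FreeGroup.mk [(v, true)] from rfl, FreeGroup.inv_mk]
        simp [FreeGroup.invRev]
      rw [hmk]
      exact hofv.inv_right.eq
    · exact hofv.eq
  -- head and last letters of the reduced word of z
  have hwne : z.toWord ≠ [] := fun h => hz (FreeGroup.toWord_eq_nil_iff.mp h)
  set h0 : α × Bool := z.toWord.head hwne with hh0def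
  set l0 : α × Bool := z.toWord.getLast hwne with hl0def
  have hh0 : z.toWord.head? = some h0 := List.head?_eq_head hwne
  have hl0 : z.toWord.getLast? = some l0 := List.getLast?_eq_getLast hwne
  -- pigeonhole: among the four one-letter words, at least two are "good"
  set S : Finset (α × Bool) := {(x, true), (x, false), (y, true), (y, false)} with hS
  set T : Finset (α × Bool) := S \ {(h0.1, !h0.2), (l0.1, !l0.2)} with hT
  have hScard : S.card = 4 := by
    rw [hS]
    rw [Finset.card_insert_of_notMem (by simp [hxy]),
      Finset.card_insert_of_notMem (by simp [hxy]),
      Finset.card_insert_of_notMem (by simp [hxy])]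
    simp
  have hTcard : 2 ≤ T.card := by
    have h1 : ({(h0.1, !h0.2), (l0.1, !l0.2)} : Finset (α × Bool)).card ≤ 2 :=
      Finset.card_insert_le _ _ |>.trans (by simp)
    have h2 := Finset.le_card_sdiff ({(h0.1, !h0.2), (l0.1, !l0.2)} : Finset (α × Bool)) S
    rw [hScard] at h2
    rw [hT]
    omega
  obtain ⟨p, hp, q, hq, hpq⟩ := (Finset.one_lt_card (s := T)).mp (by omega)
  -- each good letter must equal the head letter
  have key : ∀ r ∈ T, h0 = r := by
    intro r hr
    rw [hT, Finset.mem_sdiff] at hr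
    obtain ⟨hrS, hrN⟩ := hr
    have hr1 : r.1 = x ∨ r.1 = y := by
      rw [hS] at hrS
      simp only [Finset.mem_insert, Finset.mem_singleton] at hrS
      rcases hrS with h | h | h | h <;> rw [h] <;> simp
    have hflip : ∀ u : α × Bool, r ≠ (u.1, !u.2) → u ≠ (r.1, !r.2) := by
      rintro ⟨u1, u2⟩ hne hcon
      apply hne
      obtain ⟨r1, r2⟩ := r
      simp only [Prod.mk.injEq] at hcon ⊢
      refine ⟨hcon.1.symm, ?_⟩
      rw [hcon.2, Bool.not_not]
    simp only [Finset.mem_insert, Finset.mem_singleton, not_or] at hrN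
    have hhne : z.toWord.head? ≠ some (r.1, !r.2) := by
      rw [hh0]
      intro hcon
      exact hflip h0 hrN.1 (Option.some_inj.mp hcon)
    have hlne : z.toWord.getLast? ≠ some (r.1, !r.2) := by
      rw [hl0]
      intro hcon
      exact hflip l0 hrN.2 (Option.some_inj.mp hcon)
    have := (head_and_last hz (hcomm r hr1) hhne hlne).1
    rw [hh0] at this
    exact Option.some_inj.mp this
  exact hpq ((key p hp).symm.trans (key q hq))

/-- A free group over a type with a nontrivial central element is commutative. -/
lemma comm_of_center {α : Type*} {z : FreeGroup α} (hz : z ≠ 1)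
    (hcent : ∀ g : FreeGroup α, z * g = g * z) (a c : FreeGroup α) : a * c = c * a := by
  classical
  by_cases hsub : ∀ x y : α, x = y
  · -- the free group on a subsingleton is commutative
    have ha : a ∈ Subgroup.closure (Set.range (FreeGroup.of : α → FreeGroup α)) := by
      rw [FreeGroup.closure_range_of]; trivial
    have hc : c ∈ Subgroup.closure (Set.range (FreeGroup.of : α → FreeGroup α)) := by
      rw [FreeGroup.closure_range_of]; trivial
    refine Subgroup.closure_induction₂
      (p := fun u v _ _ => u * v = v * u) ?_ ?_ ?_ ?_ ?_ ?_ ?_ ha hc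
    · rintro _ _ ⟨u, rfl⟩ ⟨v, rfl⟩
      rw [hsub u v]
    · intro u _; rw [one_mul, mul_one]
    · intro u _; rw [one_mul, mul_one]
    · intro u v g _ _ _ h1 h2
      show Commute (u * v) g
      exact (Commute.mul_left (h1 : Commute u g) (h2 : Commute v g))
    · intro u v g _ _ _ h1 h2
      show Commute g (u * v)
      exact (Commute.mul_right (h1 : Commute g u) (h2 : Commute g v))
    · intro u v _ _ h
      exact (Commute.inv_left (h : Commute u v)).eq
    · intro u v _ _ h
      exact (Commute.inv_right (h : Commute u v)).eq
  · push_neg at hsub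
    obtain ⟨u, v, huv⟩ := hsub
    exact absurd (eq_one_of_commute_two huv (hcent _) (hcent _)) hz

/-- A free group with a nontrivial central element is commutative. -/
lemma comm_of_center' {G : Type*} [Group G] [IsFreeGroup G] {z : G} (hz : z ≠ 1)
    (hcent : ∀ g : G, z * g = g * z) (a c : G) : a * c = c * a := by
  set e := IsFreeGroup.toFreeGroup (G := G) with he
  have hz' : e z ≠ 1 := fun h => hz (by simpa using e.injective (by simpa using h))
  have hcent' : ∀ g : FreeGroup (IsFreeGroup.Generators G), e z * g = g * e z := by
    intro g
    have := hcent (e.symm g)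
    have := congrArg e this
    simpa [map_mul] using this
  have := comm_of_center hz' hcent' (e a) (e c)
  apply e.injective
  simpa [map_mul] using this

end FGCommuteAux

/-- In a free group, commuting is transitive on nontrivial elements. -/
theorem free_group_commute_trans {F : Type*} [Group F] [IsFreeGroup F]
    {a b c : F} (ha : a ≠ 1) (hb : b ≠ 1) (hc : c ≠ 1)
    (hab : a * b = b * a) (hbc : b * c = c * b) : a * c = c * a := by
  set C := Subgroup.centralizer ({b} : Set F) with hC
  have hbC : b ∈ C := Subgroup.mem_centralizer_iff.mpr (by rintro h rfl; rfl)
  have haC : a ∈ C := Subgroup.mem_centralizer_iff.mpr (by rintro h rfl; exact hab.symm)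
  have hcC : c ∈ C := Subgroup.mem_centralizer_iff.mpr (by rintro h rfl; exact hbc)
  have hz : (⟨b, hbC⟩ : C) ≠ 1 := fun h => hb (by simpa using congrArg Subtype.val h)
  have hcent : ∀ g : C, (⟨b, hbC⟩ : C) * g = g * (⟨b, hbC⟩ : C) := by
    rintro ⟨g, hg⟩
    have := Subgroup.mem_centralizer_iff.mp hg b rfl
    exact Subtype.ext this
  have := FGCommuteAux.comm_of_center' hz hcent ⟨a, haC⟩ ⟨c, hcC⟩
  simpa [Subtype.ext_iff] using this
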